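/- There exists a constant C > 0 such that for every integer n ≥ 1 and every w ∈ ℂ, |Q_n(w)| ≤ exp(2·log²(|w|+1) + C) and |Q(w)| ≤ exp(2·log²(|w|+1) + C), where log denotes the natural logarithm. -/

import Mathlib

open Filter Finset

/-- The entire function `Q(w) = ∏_{j=1}^∞ (1 - w/2^j)`. -/
noncomputable def Q (w : ℂ) : ℂ :=
  ∏' j : ℕ, (1 - w / 2 ^ (j + 1))

/-- The entire function `Q_n(w) = ∏_{j ≥ 1, j ≠ n} (1 - w/2^j)`. -/
noncomputable def Qn (n : ℕ) (w : ℂ) : ℂ :=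
  ∏' j : ℕ, if j + 1 = n then 1 else (1 - w / 2 ^ (j + 1))

lemma geom_summable (r : ℝ) : Summable (fun j : ℕ => r / 2 ^ (j + 1)) := by
  have h : Summable (fun j : ℕ => (r / 2) * (1 / 2 : ℝ) ^ j) :=
    (summable_geometric_of_lt_one (by norm_num) (by norm_num)).mul_left _
  refine h.congr fun j => ?_
  rw [pow_succ, div_pow, one_pow, div_mul_div_comm, mul_one, mul_comm (2:ℝ)]

lemma log_summable (r : ℝ) (hr : 0 ≤ r) :
    Summable (fun j : ℕ => Real.log (1 + r / 2 ^ (j + 1))) := by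
  refine Summable.of_nonneg_of_le
    (fun j => Real.log_nonneg (le_add_of_nonneg_right (by positivity))) (fun j => ?_)
    (geom_summable r)
  have h := Real.log_le_sub_one_of_pos (x := 1 + r / 2 ^ (j + 1)) (by positivity)
  linarith

lemma tsum_log_le (r : ℝ) (hr : 0 ≤ r) :
    ∑' j : ℕ, Real.log (1 + r / 2 ^ (j + 1)) ≤ 2 * Real.log (r + 1) ^ 2 + 2 := by
  set L : ℝ := Real.log (r + 1) with hL
  have hL0 : 0 ≤ L := Real.log_nonneg (by linarith)
  have hlog2 : (0.6931471803 : ℝ) < Real.log 2 := Real.log_two_gt_d9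
  set N : ℕ := ⌈L / Real.log 2⌉₊ with hN
  have hNge : L / Real.log 2 ≤ (N : ℝ) := Nat.le_ceil _
  have hNle : (N : ℝ) ≤ L / Real.log 2 + 1 := by
    have := Nat.ceil_lt_add_one (R := ℝ) (a := L / Real.log 2) (by positivity)
    linarith
  -- 2^N ≥ r + 1
  have h2N : r + 1 ≤ 2 ^ N := by
    have h1 : L ≤ (N : ℝ) * Real.log 2 := by
      rw [div_le_iff₀ (by linarith)] at hNge
      linarith
    have h2 : Real.exp L ≤ Real.exp ((N : ℝ) * Real.log 2) := Real.exp_le_exp.mpr h1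
    rw [hL, Real.exp_log (by linarith)] at h2
    rw [mul_comm, Real.exp_mul, Real.exp_log (by norm_num)] at h2
    calc r + 1 ≤ (2 : ℝ) ^ (N : ℝ) := h2
      _ = 2 ^ N := by rw [Real.rpow_natCast]
  have hsum := log_summable r hr
  have hsplit := (Summable.sum_add_tsum_nat_add (f := fun j : ℕ => Real.log (1 + r / 2 ^ (j + 1))) N hsum).symm
  rw [hsplit]
  -- bound first part
  have hfirst : ∑ j ∈ range N, Real.log (1 + r / 2 ^ (j + 1)) ≤ (N : ℝ) * L := by
    calc ∑ j ∈ range N, Real.log (1 + r / 2 ^ (j + 1)) ≤ ∑ _j ∈ range N, L := by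
          refine Finset.sum_le_sum fun j _ => ?_
          refine Real.log_le_log (by positivity) ?_
          have h1 : r / 2 ^ (j + 1) ≤ r := div_le_self hr (one_le_pow₀ one_le_two)
          linarith
      _ = (N : ℝ) * L := by simp [mul_comm]
  -- bound second part
  have hsecond : ∑' i : ℕ, Real.log (1 + r / 2 ^ (i + N + 1)) ≤ 1 := by
    have hb : ∀ i : ℕ, Real.log (1 + r / 2 ^ (i + N + 1)) ≤ (1 / 2 : ℝ) ^ (i + 1) := by
      intro i
      have h1 := Real.log_le_sub_one_of_pos (x := 1 + r / 2 ^ (i + N + 1)) (by positivity)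
      have h2 : r / 2 ^ (i + N + 1) ≤ (1 / 2 : ℝ) ^ (i + 1) := by
        have hrN : r ≤ 2 ^ N := by linarith
        rw [div_le_iff₀ (by positivity)]
        have heq : ((1 / 2 : ℝ) ^ (i + 1)) * 2 ^ (i + N + 1) = 2 ^ N := by
          field_simp
          rw [show i + N + 1 = (i + 1) + N by ring, pow_add (2 : ℝ) (i + 1) N, ← mul_assoc, ← mul_pow]; norm_num
        rw [heq]; exact hrN
      linarith
    have hgs : Summable (fun i : ℕ => (1 / 2 : ℝ) ^ (i + 1)) := by
      have h : Summable (fun i : ℕ => (1 / 2 : ℝ) * (1 / 2 : ℝ) ^ i) :=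
        (summable_geometric_of_lt_one (by norm_num) (by norm_num)).mul_left _
      exact h.congr fun i => by rw [pow_succ]; ring
    have hs2 : Summable (fun i : ℕ => Real.log (1 + r / 2 ^ (i + N + 1))) := by
      have := (log_summable r hr).comp_injective (add_left_injective N)
      exact this.congr fun i => rfl
    calc ∑' i : ℕ, Real.log (1 + r / 2 ^ (i + N + 1))
        ≤ ∑' i : ℕ, (1 / 2 : ℝ) ^ (i + 1) := Summable.tsum_le_tsum hb hs2 hgs
      _ = (1 / 2 : ℝ) * ∑' i : ℕ, (1 / 2 : ℝ) ^ i := by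
          rw [← tsum_mul_left]; exact tsum_congr fun i => by rw [pow_succ]; ring
      _ = 1 := by rw [tsum_geometric_of_lt_one (by norm_num) (by norm_num)]; norm_num
  -- combine
  have hNL : (N : ℝ) * L ≤ (3 / 2) * L ^ 2 + L := by
    have hinv : L / Real.log 2 ≤ (3 / 2) * L := by
      rw [div_le_iff₀ (by linarith)]
      nlinarith
    nlinarith
  nlinarith [sq_nonneg (L - 1)]

lemma abs_tprod_le (r : ℝ) (hr : 0 ≤ r) (f : ℕ → ℂ)
    (hf : ∀ j, ‖f j‖ ≤ 1 + r / 2 ^ (j + 1)) :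
    ‖∏' j, f j‖ ≤ Real.exp (2 * Real.log (r + 1) ^ 2 + 2) := by
  have hexp0 : (1 : ℝ) ≤ Real.exp (2 * Real.log (r + 1) ^ 2 + 2) := by
    refine Real.one_le_exp ?_
    have : 0 ≤ Real.log (r + 1) ^ 2 := sq_nonneg _
    linarith
  by_cases hmul : Multipliable f
  · have hprod := hmul.hasProd
    have htend : Tendsto (fun s : Finset ℕ => ‖∏ j ∈ s, f j‖) atTop
        (nhds ‖∏' j, f j‖) :=
      (continuous_norm.continuousAt).tendsto.comp hprod
    refine le_of_tendsto htend (Filter.Eventually.of_forall fun s => ?_)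
    calc ‖∏ j ∈ s, f j‖ = ∏ j ∈ s, ‖f j‖ := norm_prod _ _
      _ ≤ ∏ j ∈ s, (1 + r / 2 ^ (j + 1)) :=
          Finset.prod_le_prod (fun j _ => (norm_nonneg _)) (fun j _ => hf j)
      _ = ∏ j ∈ s, Real.exp (Real.log (1 + r / 2 ^ (j + 1))) := by
          refine Finset.prod_congr rfl fun j _ => ?_
          rw [Real.exp_log (by positivity)]
      _ = Real.exp (∑ j ∈ s, Real.log (1 + r / 2 ^ (j + 1))) := (Real.exp_sum _ _).symm
      _ ≤ Real.exp (2 * Real.log (r + 1) ^ 2 + 2) := by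
          refine Real.exp_le_exp.mpr ?_
          calc ∑ j ∈ s, Real.log (1 + r / 2 ^ (j + 1))
              ≤ ∑' j : ℕ, Real.log (1 + r / 2 ^ (j + 1)) :=
                Summable.sum_le_tsum s
                  (fun j _ => Real.log_nonneg (le_add_of_nonneg_right (by positivity)))
                  (log_summable r hr)
            _ ≤ 2 * Real.log (r + 1) ^ 2 + 2 := tsum_log_le r hr
  · rw [tprod_eq_one_of_not_multipliable hmul]
    simpa using hexp0

/-- There is a constant `C > 0` such that for every `n ≥ 1` and every `w ∈ ℂ`,
`|Q_n(w)| ≤ exp(2·log²(|w|+1) + C)` and `|Q(w)| ≤ exp(2·log²(|w|+1) + C)`. -/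
theorem Q_and_Qn_growth_bound :
    ∃ C : ℝ, 0 < C ∧ ∀ n : ℕ, 1 ≤ n → ∀ w : ℂ,
      ‖Qn n w‖ ≤ Real.exp (2 * Real.log (‖w‖ + 1) ^ 2 + C) ∧
      ‖Q w‖ ≤ Real.exp (2 * Real.log (‖w‖ + 1) ^ 2 + C) := by
  refine ⟨2, by norm_num, fun n hn w => ?_⟩
  set r := ‖w‖ with hr
  have hr0 : 0 ≤ r := norm_nonneg w
  have habs : ∀ j : ℕ, ‖1 - w / 2 ^ (j + 1)‖ ≤ 1 + r / 2 ^ (j + 1) := by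
    intro j
    calc ‖1 - w / 2 ^ (j + 1)‖
        ≤ ‖(1:ℂ)‖ + ‖w / 2 ^ (j + 1)‖ := by
          simpa [sub_eq_add_neg] using norm_add_le (1:ℂ) (-(w / 2 ^ (j + 1)))
      _ = 1 + r / 2 ^ (j + 1) := by
          rw [norm_one, norm_div, norm_pow]
          norm_num [hr]
  constructor
  · refine abs_tprod_le r hr0 _ fun j => ?_
    by_cases h : j + 1 = n
    · rw [if_pos h]
      have h1 : (1 : ℝ) ≤ 1 + r / 2 ^ (j + 1) := le_add_of_nonneg_right (by positivity)
      simpa using h1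
    · simpa [if_neg h] using habs j
  · exact abs_tprod_le r hr0 _ habs
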